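/- arXiv:2101.00484 — 2 statements merged into one kernel-verified Lean document; each statement's English description precedes it below -/
import Mathlib

section
/- Block Toeplitz quasi-score equivalence (two-period case): let Y = (Y₁ᵀ, Y₂ᵀ)ᵀ where Y₁ ∈ ℝ^{n₁} has mean μ₁1 and Y₂ ∈ ℝ^{n₂} has mean μ₂1, with covariance M having blocks M_{jj} = ν_j((1-α₀)I + α₀J_{n_j}) and off-diagonal block M_{12} = √(ν₁ν₂)α₁ 1_{n₁}1_{n₂}ᵀ. Let Ȳ = (Ȳ₁,Ȳ₂)ᵀ with covariance V having V_{jj} = (ν_j/n_j)(1+(n_j-1)α₀) and V_{12} = √(ν₁ν₂)α₁. Then for the 2×p derivative matrix D with rows d_jᵀ = ∂μ_j/∂θᵀ and the expanded derivative E stacking n_j copies of d_jᵀ, one has Eᵀ M⁻¹ (Y − μ) = Dᵀ V⁻¹ (Ȳ − μ̄), whenever M and V are invertible. -/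
open Matrix

/-- block Toeplitz quasi-score equivalence (two-period case):
`Eᵀ M⁻¹ (Y − μ) = Dᵀ V⁻¹ (Ȳ − μ̄)` whenever `M` and `V` are invertible. -/
theorem quasi_score_equivalence_two_periods
    (n₁ n₂ p : ℕ) (hn₁ : 0 < n₁) (hn₂ : 0 < n₂)
    (ν₁ ν₂ α₀ α₁ μ₁ μ₂ : ℝ) (hν₁ : 0 < ν₁) (hν₂ : 0 < ν₂)
    (h0 : 0 ≤ α₀) (h1 : α₀ < 1)
    (D : Matrix (Fin 2) (Fin p) ℝ) (Y : Fin n₁ ⊕ Fin n₂ → ℝ)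
    (M : Matrix (Fin n₁ ⊕ Fin n₂) (Fin n₁ ⊕ Fin n₂) ℝ)
    (hM : M = Matrix.fromBlocks
      (ν₁ • ((1 - α₀) • (1 : Matrix (Fin n₁) (Fin n₁) ℝ) +
        α₀ • (Matrix.of fun _ _ => (1 : ℝ))))
      ((Real.sqrt (ν₁ * ν₂) * α₁) • (Matrix.of fun _ _ => (1 : ℝ)))
      ((Real.sqrt (ν₁ * ν₂) * α₁) • (Matrix.of fun _ _ => (1 : ℝ)))
      (ν₂ • ((1 - α₀) • (1 : Matrix (Fin n₂) (Fin n₂) ℝ) +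
        α₀ • (Matrix.of fun _ _ => (1 : ℝ)))))
    (V : Matrix (Fin 2) (Fin 2) ℝ)
    (hV : V = !![ν₁ / n₁ * (1 + ((n₁ : ℝ) - 1) * α₀), Real.sqrt (ν₁ * ν₂) * α₁;
                 Real.sqrt (ν₁ * ν₂) * α₁, ν₂ / n₂ * (1 + ((n₂ : ℝ) - 1) * α₀)])
    (hMunit : IsUnit M.det) (hVunit : IsUnit V.det)
    (E : Matrix (Fin n₁ ⊕ Fin n₂) (Fin p) ℝ)
    (hE : E = Matrix.of (Sum.elim (fun _ => D 0) (fun _ => D 1)))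
    (μvec : Fin n₁ ⊕ Fin n₂ → ℝ)
    (hμvec : μvec = Sum.elim (fun _ => μ₁) (fun _ => μ₂))
    (Ybar : Fin 2 → ℝ)
    (hYbar : Ybar = ![(∑ k, Y (Sum.inl k)) / n₁, (∑ k, Y (Sum.inr k)) / n₂]) :
    Eᵀ *ᵥ (M⁻¹ *ᵥ (Y - μvec)) = Dᵀ *ᵥ (V⁻¹ *ᵥ (Ybar - ![μ₁, μ₂])) := by
  have hn₁' : (n₁ : ℝ) ≠ 0 := Nat.cast_ne_zero.mpr hn₁.ne'
  have hn₂' : (n₂ : ℝ) ≠ 0 := Nat.cast_ne_zero.mpr hn₂.ne'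
  set A : Matrix (Fin n₁ ⊕ Fin n₂) (Fin 2) ℝ :=
    Matrix.of (Sum.elim (fun _ => ![1, 0]) (fun _ => ![0, 1])) with hA
  set N : Matrix (Fin 2) (Fin 2) ℝ := !![(n₁:ℝ), 0; 0, (n₂:ℝ)] with hN
  -- key identity
  have hAM : Aᵀ * M = (N * V) * Aᵀ := by
    ext i j
    rcases j with j | j <;> fin_cases i <;>
      simp [hA, hN, hV, hM, Matrix.mul_apply, Fintype.sum_sum_type, Fin.sum_univ_two,
        Matrix.one_apply, mul_ite, Finset.sum_ite_eq, Finset.mul_sum,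
        Finset.sum_add_distrib] <;>
      field_simp <;> ring
  -- invertibility of N*V
  have hNdet : N.det = (n₁:ℝ) * n₂ := by simp [hN]
  have hNunit : IsUnit N.det := by
    rw [hNdet]; exact (isUnit_iff_ne_zero).mpr (mul_ne_zero hn₁' hn₂')
  have hNVunit : IsUnit (N * V).det := by
    rw [Matrix.det_mul]; exact hNunit.mul hVunit
  -- Aᵀ * M⁻¹ = V⁻¹ * N⁻¹ * Aᵀ
  have hAinv : Aᵀ * M⁻¹ = V⁻¹ * N⁻¹ * Aᵀ := by
    have h1 : Aᵀ = (N * V) * (Aᵀ * M⁻¹) := by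
      calc Aᵀ = Aᵀ * (M * M⁻¹) := by rw [Matrix.mul_nonsing_inv M hMunit, Matrix.mul_one]
        _ = (Aᵀ * M) * M⁻¹ := by rw [Matrix.mul_assoc]
        _ = (N * V) * (Aᵀ * M⁻¹) := by rw [hAM, Matrix.mul_assoc]
      
    calc Aᵀ * M⁻¹ = ((N * V)⁻¹ * (N * V)) * (Aᵀ * M⁻¹) := by
          rw [Matrix.nonsing_inv_mul _ hNVunit, Matrix.one_mul]
      _ = (N * V)⁻¹ * Aᵀ := by rw [Matrix.mul_assoc, ← h1]
      _ = V⁻¹ * N⁻¹ * Aᵀ := by rw [Matrix.mul_inv_rev]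
  -- N⁻¹ explicitly
  have hNinv : N⁻¹ = !![(n₁:ℝ)⁻¹, 0; 0, (n₂:ℝ)⁻¹] := by
    apply Matrix.inv_eq_right_inv
    ext i j
    fin_cases i <;> fin_cases j <;>
      simp [hN, Matrix.mul_apply, Fin.sum_univ_two, Matrix.one_apply, hn₁', hn₂']
  -- E = A * D
  have hEA : E = A * D := by
    ext i j
    rcases i with i | i <;>
      simp [hE, hA, Matrix.mul_apply, Fin.sum_univ_two]
  -- averaging identity
  have havg : N⁻¹ *ᵥ (Aᵀ *ᵥ (Y - μvec)) = Ybar - ![μ₁, μ₂] := by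
    funext i
    fin_cases i <;>
      · simp [hNinv, hA, hYbar, hμvec, Matrix.mulVec, dotProduct,
          Fintype.sum_sum_type, Fin.sum_univ_two, Finset.sum_sub_distrib,
          Finset.sum_const, sub_mul, div_eq_inv_mul, hn₁', hn₂',
          mul_inv_cancel₀]
        rw [mul_sub, inv_mul_cancel_left₀ (by assumption)]
  calc Eᵀ *ᵥ (M⁻¹ *ᵥ (Y - μvec))
      = (Dᵀ * (Aᵀ * M⁻¹)) *ᵥ (Y - μvec) := by
        rw [hEA, Matrix.transpose_mul, Matrix.mulVec_mulVec, Matrix.mul_assoc]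
    _ = (Dᵀ * (V⁻¹ * N⁻¹ * Aᵀ)) *ᵥ (Y - μvec) := by rw [hAinv]
    _ = Dᵀ *ᵥ (V⁻¹ *ᵥ (N⁻¹ *ᵥ (Aᵀ *ᵥ (Y - μvec)))) := by
        simp only [← Matrix.mulVec_mulVec, Matrix.mul_assoc]
    _ = Dᵀ *ᵥ (V⁻¹ *ᵥ (Ybar - ![μ₁, μ₂])) := by rw [havg]
end

section
/- Information equivalence (two-period case): under the setting of the previous statement, Eᵀ M⁻¹ E = Dᵀ V⁻¹ D. -/
open Matrix

/-- information equivalence (two-period case): `Eᵀ M⁻¹ E = Dᵀ V⁻¹ D`. -/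
theorem information_equivalence_two_periods
    (n₁ n₂ p : ℕ) (hn₁ : 0 < n₁) (hn₂ : 0 < n₂)
    (ν₁ ν₂ α₀ α₁ : ℝ) (hν₁ : 0 < ν₁) (hν₂ : 0 < ν₂)
    (h0 : 0 ≤ α₀) (h1 : α₀ < 1)
    (D : Matrix (Fin 2) (Fin p) ℝ)
    (M : Matrix (Fin n₁ ⊕ Fin n₂) (Fin n₁ ⊕ Fin n₂) ℝ)
    (hM : M = Matrix.fromBlocks
      (ν₁ • ((1 - α₀) • (1 : Matrix (Fin n₁) (Fin n₁) ℝ) +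
        α₀ • (Matrix.of fun _ _ => (1 : ℝ))))
      ((Real.sqrt (ν₁ * ν₂) * α₁) • (Matrix.of fun _ _ => (1 : ℝ)))
      ((Real.sqrt (ν₁ * ν₂) * α₁) • (Matrix.of fun _ _ => (1 : ℝ)))
      (ν₂ • ((1 - α₀) • (1 : Matrix (Fin n₂) (Fin n₂) ℝ) +
        α₀ • (Matrix.of fun _ _ => (1 : ℝ)))))
    (V : Matrix (Fin 2) (Fin 2) ℝ)
    (hV : V = !![ν₁ / n₁ * (1 + ((n₁ : ℝ) - 1) * α₀), Real.sqrt (ν₁ * ν₂) * α₁;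
                 Real.sqrt (ν₁ * ν₂) * α₁, ν₂ / n₂ * (1 + ((n₂ : ℝ) - 1) * α₀)])
    (hMunit : IsUnit M.det) (hVunit : IsUnit V.det)
    (E : Matrix (Fin n₁ ⊕ Fin n₂) (Fin p) ℝ)
    (hE : E = Matrix.of (Sum.elim (fun _ => D 0) (fun _ => D 1))) :
    Eᵀ * M⁻¹ * E = Dᵀ * V⁻¹ * D := by
  have hn₁' : (n₁ : ℝ) ≠ 0 := Nat.cast_ne_zero.mpr hn₁.ne'
  have hn₂' : (n₂ : ℝ) ≠ 0 := Nat.cast_ne_zero.mpr hn₂.ne'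
  set c : ℝ := Real.sqrt (ν₁ * ν₂) * α₁ with hc
  set P : Matrix (Fin n₁ ⊕ Fin n₂) (Fin 2) ℝ :=
    Matrix.of (Sum.elim (fun _ => ![(1:ℝ), 0]) (fun _ => ![(0:ℝ), 1])) with hP
  set W : Matrix (Fin 2) (Fin 2) ℝ :=
    !![ν₁ * (1 + ((n₁ : ℝ) - 1) * α₀), c * n₂;
       c * n₁, ν₂ * (1 + ((n₂ : ℝ) - 1) * α₀)] with hW
  set N : Matrix (Fin 2) (Fin 2) ℝ := !![(n₁ : ℝ), 0; 0, (n₂ : ℝ)] with hN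
  have hNdet : IsUnit N.det := by
    have hd : N.det = (n₁ : ℝ) * n₂ := by simp [hN, Matrix.det_fin_two_of]
    rw [hd]
    exact (isUnit_iff_ne_zero.mpr hn₁').mul (isUnit_iff_ne_zero.mpr hn₂')
  have hWV : W = V * N := by
    subst hV
    ext i j
    fin_cases i <;> fin_cases j <;>
      simp [hW, hN, Matrix.mul_apply, Fin.sum_univ_two] <;> field_simp <;> ring
  have hWdet : IsUnit W.det := by
    rw [hWV, Matrix.det_mul]
    exact hVunit.mul hNdet
  have hE' : E = P * D := by
    subst hE
    ext i j
    cases i <;> simp [hP, Matrix.mul_apply, Fin.sum_univ_two]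
  have hPtP : Pᵀ * P = N := by
    ext i j
    fin_cases i <;> fin_cases j <;>
      simp [hP, hN, Matrix.mul_apply, Matrix.transpose_apply, Fintype.sum_sum_type,
        Finset.sum_const, Finset.card_univ]
  have hMP : M * P = P * W := by
    subst hM
    ext i j
    cases i with
    | inl i =>
      fin_cases j <;>
        simp [hP, hW, Matrix.mul_apply, Fintype.sum_sum_type, Fin.sum_univ_two,
          Matrix.fromBlocks_apply₁₁, Matrix.fromBlocks_apply₁₂, Matrix.one_apply,
          mul_ite, ite_mul, Finset.sum_ite_eq, Finset.sum_const, Finset.card_univ,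
          Finset.mul_sum, Finset.sum_add_distrib] <;> ring
    | inr i =>
      fin_cases j <;>
        simp [hP, hW, Matrix.mul_apply, Fintype.sum_sum_type, Fin.sum_univ_two,
          Matrix.fromBlocks_apply₂₁, Matrix.fromBlocks_apply₂₂, Matrix.one_apply,
          mul_ite, ite_mul, Finset.sum_ite_eq, Finset.sum_const, Finset.card_univ,
          Finset.mul_sum, Finset.sum_add_distrib] <;> ring
  have hMinvP : M⁻¹ * P = P * W⁻¹ := by
    have h1 : M⁻¹ * (M * P) * W⁻¹ = P * W⁻¹ := by
      rw [← Matrix.mul_assoc, Matrix.nonsing_inv_mul M hMunit, Matrix.one_mul]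
    rw [hMP, Matrix.mul_assoc, Matrix.mul_assoc, Matrix.mul_nonsing_inv W hWdet,
      Matrix.mul_one] at h1
    exact h1
  have hVinv : V⁻¹ = N * W⁻¹ := by
    have : V = W * N⁻¹ := by
      rw [hWV, Matrix.mul_assoc, Matrix.mul_nonsing_inv N hNdet, Matrix.mul_one]
    rw [this, Matrix.mul_inv_rev, Matrix.nonsing_inv_nonsing_inv N hNdet]
  rw [hE', Matrix.transpose_mul, Matrix.mul_assoc, Matrix.mul_assoc,
    ← Matrix.mul_assoc M⁻¹ P D, hMinvP, hVinv]
  rw [← hPtP]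
  simp only [Matrix.mul_assoc]
end
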